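/- Consider ℝⁿ with the Euclidean metric, so the dynamics is q̈ = ∇f(q) with ∇f the usual gradient of a smooth function f : ℝⁿ → ℝ. Let γ : ℝ → ℝⁿ be a smooth, injective, proper, unit-speed curve (‖γ̇(s)‖ = 1 for all s) with image C = γ(ℝ). If C is a strict normal mode of q̈ = ∇f(q), then C is a straight line: there exist p, w ∈ ℝⁿ with ‖w‖ = 1 such that C = {p + s·w : s ∈ ℝ}, and moreover ∇f(p + s·w) lies in the span of w for every s ∈ ℝ. -/

import Mathlib

/-- The tangent bundle `TC = {(γ(s), v·γ̇(s)) : s, v ∈ ℝ}` of the curve `C = γ(ℝ)` in `ℝⁿ`. -/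
def TangentBundleOf {n : ℕ} (γ : ℝ → EuclideanSpace ℝ (Fin n)) :
    Set (EuclideanSpace ℝ (Fin n) × EuclideanSpace ℝ (Fin n)) :=
  {p | ∃ s v : ℝ, p.1 = γ s ∧ p.2 = v • deriv γ s}

/-- `C = γ(ℝ)` is a strict normal mode of the Euclidean dynamics `q̈ = ∇f(q)`: its tangent
bundle is an invariant set, i.e. every `C²` solution meeting it (at some time `t₀` of its
open interval of definition) remains on it. -/
def IsStrictNormalMode {n : ℕ} (f : EuclideanSpace ℝ (Fin n) → ℝ)
    (γ : ℝ → EuclideanSpace ℝ (Fin n)) : Prop :=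
  ∀ I : Set ℝ, IsOpen I → I.OrdConnected →
    ∀ q : ℝ → EuclideanSpace ℝ (Fin n), ContDiffOn ℝ 2 q I →
      (∀ t ∈ I, deriv (deriv q) t = gradient f (q t)) →
      ∀ t₀ ∈ I, (q t₀, deriv q t₀) ∈ TangentBundleOf γ →
        ∀ t ∈ I, (q t, deriv q t) ∈ TangentBundleOf γ

open Set Filter Metric
open scoped Topology RealInnerProductSpace

noncomputable section

theorem gradient_contDiff' {n : ℕ} {f : EuclideanSpace ℝ (Fin n) → ℝ}
    (hf : ContDiff ℝ (⊤ : ℕ∞) f) :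
    ContDiff ℝ 1 (gradient f) := by
  have h1 : ContDiff ℝ 1 (fderiv ℝ f) := hf.fderiv_right (by norm_cast)
  exact (InnerProductSpace.toDual ℝ (EuclideanSpace ℝ (Fin n))).symm.contDiff.comp h1

theorem exists_solution' {n : ℕ} (f : EuclideanSpace ℝ (Fin n) → ℝ) (hf : ContDiff ℝ (⊤ : ℕ∞) f)
    (x₀ y₀ : EuclideanSpace ℝ (Fin n)) :
    ∃ (q : ℝ → EuclideanSpace ℝ (Fin n)) (ε : ℝ), 0 < ε ∧ q 0 = x₀ ∧ deriv q 0 = y₀ ∧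
      ContDiffOn ℝ 2 q (Ioo (-ε) ε) ∧
      ∀ t ∈ Ioo (-ε : ℝ) ε, deriv (deriv q) t = gradient f (q t) := by
  set V : EuclideanSpace ℝ (Fin n) × EuclideanSpace ℝ (Fin n) → EuclideanSpace ℝ (Fin n) × EuclideanSpace ℝ (Fin n) := fun p => (p.2, gradient f p.1) with hV
  have hVc : ContDiff ℝ 1 V := contDiff_snd.prodMk ((gradient_contDiff' hf).comp contDiff_fst)
  obtain ⟨α, hα0, ε, hε, hα⟩ :=
    hVc.contDiffAt.exists_forall_mem_closedBall_exists_eq_forall_mem_Ioo_hasDerivAt₀ (x₀ := (x₀, y₀)) (0 : ℝ)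
  rw [zero_sub, zero_add] at hα
  set q : ℝ → EuclideanSpace ℝ (Fin n) := fun t => (α t).1 with hq
  set P : ℝ → EuclideanSpace ℝ (Fin n) := fun t => (α t).2 with hP
  have hq' : ∀ t ∈ Ioo (-ε : ℝ) ε, HasDerivAt q (P t) t := by
    intro t ht
    have h := ((ContinuousLinearMap.fst ℝ (EuclideanSpace ℝ (Fin n)) (EuclideanSpace ℝ (Fin n))).hasFDerivAt.comp t (hα t ht).hasFDerivAt).hasDerivAt
    simp at h; exact h
  have hP' : ∀ t ∈ Ioo (-ε : ℝ) ε, HasDerivAt P (gradient f (q t)) t := by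
    intro t ht
    have h := ((ContinuousLinearMap.snd ℝ (EuclideanSpace ℝ (Fin n)) (EuclideanSpace ℝ (Fin n))).hasFDerivAt.comp t (hα t ht).hasFDerivAt).hasDerivAt
    simp at h; exact h
  have h0 : (0 : ℝ) ∈ Ioo (-ε : ℝ) ε := ⟨by linarith, hε⟩
  have hopen : IsOpen (Ioo (-ε : ℝ) ε) := isOpen_Ioo
  have hderivq : ∀ t ∈ Ioo (-ε : ℝ) ε, deriv q t = P t := fun t ht => (hq' t ht).deriv
  have hderivq_ev : ∀ t ∈ Ioo (-ε : ℝ) ε, deriv q =ᶠ[nhds t] P := fun t ht =>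
    eventually_of_mem (hopen.mem_nhds ht) hderivq
  have hqc : ContinuousOn q (Ioo (-ε : ℝ) ε) := fun t ht =>
    ((hq' t ht).continuousAt).continuousWithinAt
  have hPc : ContinuousOn P (Ioo (-ε : ℝ) ε) := fun t ht =>
    ((hP' t ht).continuousAt).continuousWithinAt
  have hderivP : ∀ t ∈ Ioo (-ε : ℝ) ε, deriv P t = gradient f (q t) := fun t ht => (hP' t ht).deriv
  refine ⟨q, ε, hε, ?_, ?_, ?_, ?_⟩
  · show (α 0).1 = x₀; rw [hα0]
  · rw [hderivq 0 h0]; show (α 0).2 = y₀; rw [hα0]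
  · -- ContDiffOn ℝ 2 q
    have hP1 : ContDiffOn ℝ 1 P (Ioo (-ε : ℝ) ε) := by
      rw [show (1 : WithTop ℕ∞) = 0 + 1 by norm_num, contDiffOn_succ_iff_deriv_of_isOpen hopen]
      refine ⟨fun t ht => (hP' t ht).differentiableAt.differentiableWithinAt, by simp, ?_⟩
      rw [contDiffOn_zero]
      exact ContinuousOn.congr ((gradient_contDiff' hf).continuous.comp_continuousOn hqc) (fun t ht => hderivP t ht)
    rw [show (2 : WithTop ℕ∞) = 1 + 1 by norm_num, contDiffOn_succ_iff_deriv_of_isOpen hopen]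
    refine ⟨fun t ht => (hq' t ht).differentiableAt.differentiableWithinAt, by simp, ?_⟩
    exact hP1.congr hderivq
  · intro t ht
    rw [(hderivq_ev t ht).deriv_eq, hderivP t ht]

theorem key_lemma {n : ℕ} (f : EuclideanSpace ℝ (Fin n) → ℝ) (hf : ContDiff ℝ (⊤ : ℕ∞) f)
    (γ : ℝ → EuclideanSpace ℝ (Fin n)) (hγsmooth : ContDiff ℝ (⊤ : ℕ∞) γ)
    (hγinj : Function.Injective γ) (hγproper : IsProperMap γ)
    (hγunit : ∀ s : ℝ, ‖deriv γ s‖ = 1)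
    (hmode : IsStrictNormalMode f γ) (s₀ v : ℝ) :
    ∃ c : ℝ, gradient f (γ s₀) = c • deriv γ s₀ + (v * v) • deriv (deriv γ) s₀ := by
  have hγd : Differentiable ℝ γ := hγsmooth.differentiable (by norm_cast)
  have hγ'smooth : ContDiff ℝ (⊤ : ℕ∞) (deriv γ) := by
    have := (contDiff_infty_iff_deriv.mp (by exact_mod_cast hγsmooth)).2
    exact_mod_cast this
  have hγ'd : Differentiable ℝ (deriv γ) := hγ'smooth.differentiable (by norm_cast)
  obtain ⟨q, ε, hε, hq0, hq'0, hqC2, hode⟩ := exists_solution' f hf (γ s₀) (v • deriv γ s₀)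
  have hopen : IsOpen (Ioo (-ε : ℝ) ε) := isOpen_Ioo
  have h0 : (0 : ℝ) ∈ Ioo (-ε : ℝ) ε := ⟨by linarith, hε⟩
  have hinv := hmode (Ioo (-ε) ε) hopen Set.ordConnected_Ioo q hqC2 hode 0 h0
      ⟨s₀, v, hq0, by rw [hq'0]⟩
  -- local inverse setup
  set w₀ := deriv γ s₀ with hw₀def
  have hw₀0 : w₀ ≠ 0 := by
    intro h
    have := hγunit s₀
    rw [← hw₀def, h, norm_zero] at this
    norm_num at this
  set g : ℝ → ℝ := fun u => ⟪γ u, w₀⟫ with hgdef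
  have hgcd : ContDiffAt ℝ 2 g s₀ :=
    ((hγsmooth.of_le (by norm_cast)).inner ℝ contDiff_const).contDiffAt
  have hgd1 : HasDerivAt g 1 s₀ := by
    have h := ((hγd s₀).hasDerivAt).inner ℝ (hasDerivAt_const s₀ w₀)
    have h2 : ⟪γ s₀, (0 : EuclideanSpace ℝ (Fin n))⟫ + ⟪deriv γ s₀, w₀⟫ = 1 := by
      rw [inner_zero_right, ← hw₀def, real_inner_self_eq_norm_sq, hγunit s₀]; norm_num
    rw [h2] at h
    exact h
  have hgf' : HasFDerivAt g ((ContinuousLinearEquiv.refl ℝ ℝ : ℝ ≃L[ℝ] ℝ) : ℝ →L[ℝ] ℝ) s₀ := by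
    have : ((ContinuousLinearEquiv.refl ℝ ℝ : ℝ ≃L[ℝ] ℝ) : ℝ →L[ℝ] ℝ)
        = ContinuousLinearMap.smulRight (1 : ℝ →L[ℝ] ℝ) (1 : ℝ) := by
      ext x; simp
    rw [this]
    exact hgd1
  have hn2 : (1 : WithTop ℕ∞) ≤ 2 := by norm_num
  set ψ : ℝ → ℝ := hgcd.localInverse hgf' two_ne_zero with hψdef
  have hψcd : ContDiffAt ℝ 2 ψ (g s₀) := hgcd.to_localInverse hgf' two_ne_zero
  have hψg : ∀ᶠ u in 𝓝 s₀, ψ (g u) = u :=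
    (hgcd.hasStrictFDerivAt' hgf' two_ne_zero).eventually_left_inverse
  set σ : ℝ → ℝ := fun t => ψ (⟪q t, w₀⟫) with hσdef
  have hσ0 : σ 0 = s₀ := by
    rw [hσdef]
    simp only [hq0]
    exact hgcd.localInverse_apply_image hgf' two_ne_zero
  -- σ is C² at 0
  have hqcd : ContDiffAt ℝ 2 q 0 := hqC2.contDiffAt (hopen.mem_nhds h0)
  have hincd : ContDiffAt ℝ 2 (fun t => ⟪q t, w₀⟫) 0 := hqcd.inner ℝ contDiffAt_const
  have hgs0 : (⟪q 0, w₀⟫ : ℝ) = g s₀ := by rw [hq0]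
  have hσcd : ContDiffAt ℝ 2 σ 0 := by
    have hψ' : ContDiffAt ℝ 2 ψ (⟪q 0, w₀⟫) := hgs0 ▸ hψcd
    exact hψ'.comp 0 hincd
  -- eventually q t = γ (σ t)
  obtain ⟨U, hUnhds, hUleft⟩ := hψg.exists_mem
  obtain ⟨U', hU'sub, hU'open, hsU'⟩ := _root_.mem_nhds_iff.mp hUnhds
  have hFclosed : IsClosed (γ '' U'ᶜ) := hγproper.isClosedMap _ hU'open.isClosed_compl
  have hγs₀ : γ s₀ ∉ γ '' U'ᶜ := by
    rintro ⟨u, hu, hequ⟩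
    refine hu ?_
    rw [hγinj hequ]
    exact hsU'
  have hq_cont : ContinuousAt q 0 := hqcd.continuousAt
  have hql : ∀ᶠ t in 𝓝 0, q t ∉ γ '' U'ᶜ := by
    have h1 : (γ '' U'ᶜ)ᶜ ∈ 𝓝 (γ s₀) := hFclosed.isOpen_compl.mem_nhds hγs₀
    exact hq_cont.preimage_mem_nhds (hq0 ▸ h1)
  have heq : q =ᶠ[𝓝 0] fun t => γ (σ t) := by
    filter_upwards [hql, hopen.mem_nhds h0] with t hnot hts
    obtain ⟨u, b, hqt0, hq't⟩ := hinv t hts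
    have hqt : q t = γ u := hqt0
    have huU' : u ∈ U' := by
      by_contra h
      exact hnot ⟨u, h, hqt.symm⟩
    have hσtu : σ t = u := by
      have h3 : (⟪q t, w₀⟫ : ℝ) = g u := by rw [hqt]
      calc σ t = ψ ⟪q t, w₀⟫ := rfl
        _ = ψ (g u) := by rw [h3]
        _ = u := hUleft u (hU'sub huU')
    rw [hσtu]
    exact hqt
  -- σ is C² on an open neighborhood W of 0
  obtain ⟨W₀, hW₀, hσW₀⟩ := hσcd.contDiffOn le_rfl (by simp)
  obtain ⟨W, hWsub, hWopen, h0W⟩ := _root_.mem_nhds_iff.mp hW₀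
  have hσW : ContDiffOn ℝ 2 σ W := hσW₀.mono hWsub
  have h21 : (2 : WithTop ℕ∞) = 1 + 1 := by norm_num
  have hσdiff : DifferentiableOn ℝ σ W := hσW.differentiableOn (by norm_num)
  have hdσ : ContDiffOn ℝ 1 (deriv σ) W :=
    ((contDiffOn_succ_iff_deriv_of_isOpen hWopen).mp (h21 ▸ hσW)).2.2
  have hσ'd0 : DifferentiableAt ℝ (deriv σ) 0 :=
    (hdσ.differentiableOn one_ne_zero).differentiableAt (hWopen.mem_nhds h0W)
  have hσd0 : HasDerivAt σ (deriv σ 0) 0 :=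
    (hσdiff.differentiableAt (hWopen.mem_nhds h0W)).hasDerivAt
  -- first derivative identity
  have hchain : deriv q =ᶠ[𝓝 0] fun t => deriv σ t • deriv γ (σ t) := by
    have hq'ev : deriv q =ᶠ[𝓝 0] deriv (fun t => γ (σ t)) := heq.deriv
    filter_upwards [hq'ev, hWopen.mem_nhds h0W] with t h1 htW
    have hσt : HasDerivAt σ (deriv σ t) t :=
      (hσdiff.differentiableAt (hWopen.mem_nhds htW)).hasDerivAt
    have h2 := ((hγd (σ t)).hasDerivAt).scomp t hσt
    rw [h1]
    exact h2.deriv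
  have hσ'0v : deriv σ 0 = v := by
    have h00 : deriv q 0 = deriv σ 0 • deriv γ (σ 0) := hchain.self_of_nhds
    rw [hq'0, hσ0] at h00
    exact (smul_left_injective ℝ hw₀0 h00).symm
  -- second derivative
  have hB : HasDerivAt (fun t => deriv γ (σ t)) (deriv σ 0 • deriv (deriv γ) s₀) 0 := by
    have h2 := ((hγ'd (σ 0)).hasDerivAt).scomp 0 hσd0
    simp only [hσ0] at h2
    exact h2
  have hA : HasDerivAt (deriv σ) (deriv (deriv σ) 0) 0 := hσ'd0.hasDerivAt
  have hsmul := hA.smul hB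
  have hddq : deriv (deriv q) 0
      = deriv σ 0 • (deriv σ 0 • deriv (deriv γ) s₀) + deriv (deriv σ) 0 • deriv γ (σ 0) := by
    rw [hchain.deriv_eq]; exact hsmul.deriv
  have hgrad : gradient f (γ s₀) = deriv (deriv q) 0 := by
    rw [hode 0 h0, hq0]
  refine ⟨deriv (deriv σ) 0, ?_⟩
  rw [hgrad, hddq, hσ0, hσ'0v, ← hw₀def, smul_smul, add_comm]

/-- **Corollary 1.** In `ℝⁿ` with the Euclidean metric, strict normal modes are straight
lines: if the image `C = γ(ℝ)` of a smooth, injective, proper, unit-speed curve `γ` is a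
strict normal mode of `q̈ = ∇f(q)`, then `C = {p + s·w : s ∈ ℝ}` for some `p, w` with
`‖w‖ = 1`, and the gradient `∇f(p + s·w)` lies in the span of `w` for every `s`. -/
theorem strict_normal_mode_euclidean_is_line
    {n : ℕ} (f : EuclideanSpace ℝ (Fin n) → ℝ) (hf : ContDiff ℝ (⊤ : ℕ∞) f)
    (γ : ℝ → EuclideanSpace ℝ (Fin n)) (hγsmooth : ContDiff ℝ (⊤ : ℕ∞) γ)
    (hγinj : Function.Injective γ) (hγproper : IsProperMap γ)
    (hγunit : ∀ s : ℝ, ‖deriv γ s‖ = 1)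
    (hmode : IsStrictNormalMode f γ) :
    ∃ p w : EuclideanSpace ℝ (Fin n), ‖w‖ = 1 ∧
      Set.range γ = {x | ∃ s : ℝ, x = p + s • w} ∧
      ∀ s : ℝ, ∃ a : ℝ, gradient f (p + s • w) = a • w := by
  have hγd : Differentiable ℝ γ := hγsmooth.differentiable (by norm_cast)
  have hγ'smooth : ContDiff ℝ (⊤ : ℕ∞) (deriv γ) := by
    have := (contDiff_infty_iff_deriv.mp (by exact_mod_cast hγsmooth)).2
    exact_mod_cast this
  have hγ'd : Differentiable ℝ (deriv γ) := hγ'smooth.differentiable (by norm_cast)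
  have horth : ∀ s : ℝ, (⟪deriv γ s, deriv (deriv γ) s⟫ : ℝ) = 0 := by
    intro s
    have hconst : (fun u : ℝ => (⟪deriv γ u, deriv γ u⟫ : ℝ)) = fun _ => (1 : ℝ) := by
      funext u
      rw [real_inner_self_eq_norm_sq, hγunit u]
      norm_num
    have h1 : HasDerivAt (fun u : ℝ => (⟪deriv γ u, deriv γ u⟫ : ℝ))
        (⟪deriv γ s, deriv (deriv γ) s⟫ + ⟪deriv (deriv γ) s, deriv γ s⟫) s :=
      ((hγ'd s).hasDerivAt).inner ℝ ((hγ'd s).hasDerivAt)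
    rw [hconst] at h1
    have h3 := h1.unique (hasDerivAt_const s 1)
    have h4 : (⟪deriv (deriv γ) s, deriv γ s⟫ : ℝ) = ⟪deriv γ s, deriv (deriv γ) s⟫ :=
      real_inner_comm _ _
    rw [h4] at h3
    linarith
  have hzero : ∀ s : ℝ, deriv (deriv γ) s = 0 ∧ ∃ c : ℝ, gradient f (γ s) = c • deriv γ s := by
    intro s
    obtain ⟨c₁, h1⟩ := key_lemma f hf γ hγsmooth hγinj hγproper hγunit hmode s 1
    obtain ⟨c₂, h2⟩ := key_lemma f hf γ hγsmooth hγinj hγproper hγunit hmode s 2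
    have h3 : c₁ • deriv γ s + ((1 : ℝ) * 1) • deriv (deriv γ) s
        = c₂ • deriv γ s + ((2 : ℝ) * 2) • deriv (deriv γ) s := by rw [← h1, ← h2]
    have h4 : (3 : ℝ) • deriv (deriv γ) s = (c₁ - c₂) • deriv γ s := by
      linear_combination (norm := module) -h3
    have h5 : (3 : ℝ) * ⟪deriv (deriv γ) s, deriv (deriv γ) s⟫
        = (c₁ - c₂) * ⟪deriv γ s, deriv (deriv γ) s⟫ := by
      rw [← real_inner_smul_left, ← real_inner_smul_left, h4]
    rw [horth s, mul_zero] at h5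
    have ha : deriv (deriv γ) s = 0 := by
      have h6 : (⟪deriv (deriv γ) s, deriv (deriv γ) s⟫ : ℝ) = 0 := by linarith
      exact inner_self_eq_zero.mp h6
    refine ⟨ha, c₁, ?_⟩
    rw [h1, ha, smul_zero, add_zero]
  set w := deriv γ 0 with hwdef
  have hconstw : ∀ s : ℝ, deriv γ s = w := fun s =>
    is_const_of_deriv_eq_zero hγ'd (fun x => (hzero x).1) s 0
  have hline : ∀ s : ℝ, γ s = γ 0 + s • w := by
    intro s
    have hh : ∀ u : ℝ, HasDerivAt (fun r : ℝ => γ r - (γ 0 + r • w)) 0 u := by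
      intro u
      have h1 : HasDerivAt (fun r : ℝ => γ 0 + r • w) w u := by
        simpa using ((hasDerivAt_id u).smul_const w).const_add (γ 0)
      have h2 := (hγd u).hasDerivAt.sub h1
      rw [hconstw u, sub_self] at h2
      exact h2
    have hdiff : Differentiable ℝ (fun r : ℝ => γ r - (γ 0 + r • w)) := fun u =>
      (hh u).differentiableAt
    have h7 := is_const_of_deriv_eq_zero hdiff (fun x => (hh x).deriv) s 0
    have h8 : γ 0 - (γ 0 + (0 : ℝ) • w) = 0 := by simp
    rw [h8] at h7
    have := sub_eq_zero.mp h7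
    exact this
  refine ⟨γ 0, w, hγunit 0, ?_, ?_⟩
  · ext x
    simp only [Set.mem_range, Set.mem_setOf_eq]
    constructor
    · rintro ⟨s, rfl⟩
      exact ⟨s, hline s⟩
    · rintro ⟨s, rfl⟩
      exact ⟨s, hline s⟩
  · intro s
    obtain ⟨c, hc⟩ := (hzero s).2
    refine ⟨c, ?_⟩
    rw [← hline s, hc, hconstw s]
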